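/- arXiv:2205.08280 — 2 statements merged into one kernel-verified Lean document; each statement's English description precedes it below -/
import Mathlib

section
/- Fix p, q ≥ 1 and let Sr(n,p,q) be the number of nonempty sets F ⊆ {1,...,n} such that p·min F ≥ |F| and F is either a singleton or an arithmetic progression with common difference q. Then for all n ≥ 1, Sr(n+1,p,q) - Sr(n,p,q) = ⌊(1/q)(n + 1 - ⌈(n+1+q)/(pq+1)⌉)⌋ + 1. -/
/-- Ceiling of a / b for natural numbers. -/
def ceilDiv (a b : ℕ) : ℕ := (a + b - 1) / b

/-- F is a singleton or an arithmetic progression with common difference q. -/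
def IsAP (q : ℕ) (F : Finset ℕ) : Prop :=
  F.card = 1 ∨ ∃ a m : ℕ, 2 ≤ m ∧ F = (Finset.range m).image (fun i => a + q * i)

/-- Number of nonempty F ⊆ {1,...,n} with p·min F ≥ |F| that are singletons or
arithmetic progressions of common difference q. -/
noncomputable def Sr (n p q : ℕ) : ℕ :=
  Nat.card {F : Finset ℕ //
    F.Nonempty ∧ F ⊆ Finset.Icc 1 n ∧
    p * sInf (F : Set ℕ) ≥ F.card ∧ IsAP q F}

lemma ceilDiv_le_iff' {x b t : ℕ} (hb : 1 ≤ b) : ceilDiv x b ≤ t ↔ x ≤ b * t := by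
  unfold ceilDiv
  rw [Nat.div_le_iff_le_mul_add_pred hb]
  omega

lemma le_mul_ceilDiv' {x b : ℕ} (hb : 1 ≤ b) : x ≤ b * ceilDiv x b :=
  (ceilDiv_le_iff' hb).1 le_rfl

lemma one_le_ceilDiv' {x b : ℕ} (hb : 1 ≤ b) (hx : 1 ≤ x) : 1 ≤ ceilDiv x b := by
  rcases Nat.eq_zero_or_pos (ceilDiv x b) with h | h
  · have h2 := le_mul_ceilDiv' (x := x) hb
    rw [h, Nat.mul_zero] at h2; omega
  · exact h

lemma AP_inj {q : ℕ} (hq : 1 ≤ q) (a : ℕ) : Function.Injective (fun i => a + q * i) := by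
  intro i j h
  simp only at h
  have : q * i = q * j := by omega
  exact Nat.eq_of_mul_eq_mul_left hq this

lemma card_image_AP {q : ℕ} (hq : 1 ≤ q) (a m : ℕ) :
    ((Finset.range m).image (fun i => a + q * i)).card = m := by
  rw [Finset.card_image_of_injective _ (AP_inj hq a), Finset.card_range]

lemma sInf_image_AP (q a m : ℕ) (hm : 1 ≤ m) :
    sInf ((((Finset.range m).image (fun i => a + q * i)) : Finset ℕ) : Set ℕ) = a := by
  have ha : a ∈ (((Finset.range m).image (fun i => a + q * i)) : Finset ℕ) := by
    simp only [Finset.mem_image, Finset.mem_range]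
    exact ⟨0, hm, by omega⟩
  apply le_antisymm
  · exact Nat.sInf_le ha
  · have hne : ((((Finset.range m).image (fun i => a + q * i)) : Finset ℕ) : Set ℕ).Nonempty :=
      ⟨a, ha⟩
    have hmem := Nat.sInf_mem hne
    rw [Finset.mem_coe, Finset.mem_image] at hmem
    obtain ⟨i, _, hi⟩ := hmem
    simp only [Finset.mem_range] at *
    omega

noncomputable def SrSet (p q n : ℕ) : Finset (Finset ℕ) :=
  @Finset.filter _ (fun F => F.Nonempty ∧ F ⊆ Finset.Icc 1 n ∧
      p * sInf (F : Set ℕ) ≥ F.card ∧ IsAP q F) (Classical.decPred _)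
    (Finset.Icc 1 n).powerset

lemma mem_SrSet {p q n : ℕ} {F : Finset ℕ} :
    F ∈ SrSet p q n ↔ F.Nonempty ∧ F ⊆ Finset.Icc 1 n ∧
      p * sInf (F : Set ℕ) ≥ F.card ∧ IsAP q F := by
  simp only [SrSet, Finset.mem_filter, Finset.mem_powerset]
  tauto

lemma Sr_eq_card (n p q : ℕ) : Sr n p q = (SrSet p q n).card := by
  have h1 : {F : Finset ℕ | F.Nonempty ∧ F ⊆ Finset.Icc 1 n ∧
      p * sInf (F : Set ℕ) ≥ F.card ∧ IsAP q F} = ↑(SrSet p q n) := by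
    ext F
    simp only [Set.mem_setOf_eq, Finset.mem_coe, mem_SrSet]
  have h2 : Sr n p q = Set.ncard {F : Finset ℕ | F.Nonempty ∧ F ⊆ Finset.Icc 1 n ∧
      p * sInf (F : Set ℕ) ≥ F.card ∧ IsAP q F} := Nat.card_coe_set_eq _
  rw [h2, h1, Set.ncard_coe_finset]

theorem stmt_8 (p q : ℕ) (hp : 1 ≤ p) (hq : 1 ≤ q) :
    ∀ n : ℕ, 1 ≤ n →
      Sr (n + 1) p q - Sr n p q
        = (n + 1 - ceilDiv (n + 1 + q) (p * q + 1)) / q + 1 := by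
  intro n hn
  classical
  set c := ceilDiv (n + 1 + q) (p * q + 1) with hc
  set K := (n + 1 - c) / q with hKdef
  have hpq : 1 ≤ p * q + 1 := by omega
  have hc1 : 1 ≤ c := by rw [hc]; exact one_le_ceilDiv' hpq (by omega)
  have hcn : c ≤ n + 1 := by
    rw [hc, ceilDiv_le_iff' hpq]
    have e : (p * q + 1) * (n + 1) = q * (p * (n + 1)) + (n + 1) := by ring
    have h1 : 1 * 1 ≤ p * (n + 1) := Nat.mul_le_mul hp (by omega)
    have h2 : q * 1 ≤ q * (p * (n + 1)) := Nat.mul_le_mul_left q (by omega)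
    omega
  have hKq : K * q ≤ n + 1 - c := Nat.div_mul_le_self _ _
  have hkq : ∀ k, k ≤ K → k * q + c ≤ n + 1 := by
    intro k hk
    have h1 : k * q ≤ K * q := Nat.mul_le_mul_right q hk
    omega
  set g : ℕ → Finset ℕ :=
    fun k => (Finset.range (k + 1)).image (fun i => (n + 1 - k * q) + q * i) with hg
  have hgcard : ∀ k, (g k).card = k + 1 := fun k => card_image_AP hq _ _
  have hgtop : ∀ k, k ≤ K → n + 1 ∈ g k := by
    intro k hk
    have h1 := hkq k hk
    simp only [hg, Finset.mem_image, Finset.mem_range]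
    refine ⟨k, by omega, ?_⟩
    rw [Nat.mul_comm q k]; omega
  have hgmem : ∀ k, k ≤ K → g k ∈ SrSet p q (n + 1) := by
    intro k hk
    have h1 := hkq k hk
    have ha : 1 ≤ n + 1 - k * q := by omega
    rw [mem_SrSet]
    refine ⟨⟨n + 1, hgtop k hk⟩, ?_, ?_, ?_⟩
    · intro x hx
      simp only [hg, Finset.mem_image, Finset.mem_range] at hx
      obtain ⟨i, hi, rfl⟩ := hx
      have h2 : q * i ≤ q * k := Nat.mul_le_mul_left q (by omega)
      rw [Nat.mul_comm q k] at h2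
      rw [Finset.mem_Icc]
      omega
    · have hinf : sInf ((g k : Finset ℕ) : Set ℕ) = n + 1 - k * q := by
        simp only [hg]; exact sInf_image_AP q _ _ (by omega)
      rw [hinf, hgcard k]
      have hca : c ≤ n + 1 - k * q := by omega
      have h9a : n + 1 + q ≤ (p * q + 1) * c := by rw [hc]; exact le_mul_ceilDiv' hpq
      have h9 : n + 1 + q ≤ (p * q + 1) * (n + 1 - k * q) :=
        le_trans h9a (Nat.mul_le_mul_left _ hca)
      have h10 : (p * q + 1) * (n + 1 - k * q)
          = q * (p * (n + 1 - k * q)) + (n + 1 - k * q) := by ring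
      have h11 : q * (k + 1) = k * q + q := by ring
      have h12 : q * (k + 1) ≤ q * (p * (n + 1 - k * q)) := by omega
      exact Nat.le_of_mul_le_mul_left h12 hq
    · rcases Nat.eq_zero_or_pos k with rfl | hk1
      · exact Or.inl (hgcard 0)
      · refine Or.inr ⟨n + 1 - k * q, k + 1, by omega, ?_⟩
        simp only [hg]
  have hsplit : SrSet p q (n + 1) = SrSet p q n ∪ (Finset.range (K + 1)).image g := by
    ext F
    constructor
    · intro hF
      rw [mem_SrSet] at hF
      obtain ⟨hne, hsub, hcond, hap⟩ := hF
      by_cases hsubn : F ⊆ Finset.Icc 1 n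
      · exact Finset.mem_union_left _ (mem_SrSet.mpr ⟨hne, hsubn, hcond, hap⟩)
      · have htop : n + 1 ∈ F := by
          by_contra h
          apply hsubn
          intro x hx
          have h2 := hsub hx
          have h3 : x ≠ n + 1 := fun he => h (he ▸ hx)
          rw [Finset.mem_Icc] at h2 ⊢
          omega
        apply Finset.mem_union_right
        rcases hap with h1 | ⟨a, m, hm2, hFeq⟩
        · obtain ⟨x, hx⟩ := Finset.card_eq_one.mp h1
          rw [hx] at htop
          have hxtop : n + 1 = x := Finset.mem_singleton.mp htop
          refine Finset.mem_image.mpr ⟨0, Finset.mem_range.mpr (Nat.succ_pos K), ?_⟩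
          rw [hx, ← hxtop]
          simp [hg]
        · obtain ⟨k, rfl⟩ : ∃ k, m = k + 1 := ⟨m - 1, by omega⟩
          rw [hFeq] at htop
          simp only [Finset.mem_image, Finset.mem_range] at htop
          obtain ⟨i, hi, hieq⟩ := htop
          have hamem : a + q * k ∈ F := by
            rw [hFeq]
            simp only [Finset.mem_image, Finset.mem_range]
            exact ⟨k, by omega, rfl⟩
          have h3 := hsub hamem
          rw [Finset.mem_Icc] at h3
          have h4 : q * i ≤ q * k := Nat.mul_le_mul_left q (by omega)
          have hik : i = k := by
            have h5 : q * k ≤ q * i := by omega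
            have := Nat.le_of_mul_le_mul_left h5 hq
            omega
          subst hik
          have ha0 : a ∈ F := by
            rw [hFeq]
            simp only [Finset.mem_image, Finset.mem_range]
            exact ⟨0, by omega, by omega⟩
          have ha1 : 1 ≤ a := by
            have h6 := hsub ha0; rw [Finset.mem_Icc] at h6; omega
          have hcard : F.card = i + 1 := by rw [hFeq]; exact card_image_AP hq _ _
          have hinf : sInf (F : Set ℕ) = a := by
            rw [hFeq]; exact sInf_image_AP q _ _ (by omega)
          rw [hinf, hcard] at hcond
          have h5 : q * (i + 1) ≤ q * (p * a) := Nat.mul_le_mul_left q hcond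
          have h10 : (p * q + 1) * a = q * (p * a) + a := by ring
          have h11 : q * (i + 1) = q * i + q := by ring
          have h6 : n + 1 + q ≤ (p * q + 1) * a := by omega
          have hca : c ≤ a := by rw [hc]; exact (ceilDiv_le_iff' hpq).mpr h6
          have h8 : i * q ≤ n + 1 - c := by rw [Nat.mul_comm]; omega
          have hiK : i ≤ K := by rw [hKdef]; exact (Nat.le_div_iff_mul_le hq).mpr h8
          refine Finset.mem_image.mpr ⟨i, Finset.mem_range.mpr (by omega), ?_⟩
          have hae : n + 1 - i * q = a := by rw [Nat.mul_comm]; omega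
          simp only [hg, hae, hFeq]
    · intro hF
      rw [Finset.mem_union] at hF
      rcases hF with h1 | h1
      · rw [mem_SrSet] at h1 ⊢
        exact ⟨h1.1, h1.2.1.trans (Finset.Icc_subset_Icc_right (by omega)),
          h1.2.2.1, h1.2.2.2⟩
      · rw [Finset.mem_image] at h1
        obtain ⟨k, hk, rfl⟩ := h1
        exact hgmem k (Nat.lt_succ_iff.mp (Finset.mem_range.mp hk))
  have hdisj : Disjoint (SrSet p q n) ((Finset.range (K + 1)).image g) := by
    rw [Finset.disjoint_left]
    intro F hF hF2
    rw [Finset.mem_image] at hF2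
    obtain ⟨k, hk, rfl⟩ := hF2
    have h1 : n + 1 ∈ g k := hgtop k (Nat.lt_succ_iff.mp (Finset.mem_range.mp hk))
    have h2 := (mem_SrSet.mp hF).2.1 h1
    rw [Finset.mem_Icc] at h2; omega
  have hcardim : ((Finset.range (K + 1)).image g).card = K + 1 := by
    rw [Finset.card_image_of_injOn, Finset.card_range]
    intro x _ y _ hxy
    have e1 := hgcard x
    have e2 := hgcard y
    rw [hxy] at e1
    omega
  have hfinal : (SrSet p q (n + 1)).card = (SrSet p q n).card + (K + 1) := by
    rw [hsplit, Finset.card_union_of_disjoint hdisj, hcardim]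
  rw [Sr_eq_card, Sr_eq_card, hfinal]
  omega
end

section
/- Fix p, q ≥ 1 and let Sr(n,p,q) be the number of nonempty sets F ⊆ {1,...,n} with p·min F ≥ |F| such that F is a singleton or an arithmetic progression of common difference q. Then Sr(n+1,p,q) - Sr(n,p,q) = ⌊p(n+q+1)/(pq+1)⌋ for all n ≥ 1. -/
def AP (q a m : ℕ) : Finset ℕ := (Finset.range m).image (fun i => a + q * i)

lemma AP_card {q : ℕ} (hq : 1 ≤ q) (a m : ℕ) : (AP q a m).card = m := by
  rw [AP, Finset.card_image_of_injective _ (AP_inj hq a), Finset.card_range]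

lemma mem_AP {q a m x : ℕ} : x ∈ AP q a m ↔ ∃ i, i < m ∧ x = a + q * i := by
  simp [AP, Finset.mem_image, eq_comm]

lemma AP_inf (q a m : ℕ) (hm : 1 ≤ m) : sInf (↑(AP q a m) : Set ℕ) = a := by
  have ha : a ∈ AP q a m := mem_AP.2 ⟨0, hm, by simp⟩
  have ha' : a ∈ (↑(AP q a m) : Set ℕ) := by simpa using ha
  refine le_antisymm (Nat.sInf_le ha') ?_
  have hne : (↑(AP q a m) : Set ℕ).Nonempty := ⟨a, ha'⟩
  have hmem := Nat.sInf_mem hne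
  rw [Finset.mem_coe, mem_AP] at hmem
  obtain ⟨i, hi, hx⟩ := hmem
  omega

lemma prop_iff (p q n : ℕ) (hp : 1 ≤ p) (hq : 1 ≤ q) (F : Finset ℕ) :
    (F.Nonempty ∧ F ⊆ Finset.Icc 1 n ∧ p * sInf (F : Set ℕ) ≥ F.card ∧ IsAP q F)
    ↔ ∃ a m : ℕ, (1 ≤ a ∧ 1 ≤ m ∧ a + q * (m - 1) ≤ n ∧ m ≤ p * a) ∧ F = AP q a m := by
  constructor
  · rintro ⟨hne, hsub, hinf, hap⟩
    rcases hap with h1 | ⟨a, m, hm2, hF⟩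
    · obtain ⟨x, hx⟩ := Finset.card_eq_one.1 h1
      have hxmem : x ∈ Finset.Icc 1 n := hsub (by simp [hx])
      rw [Finset.mem_Icc] at hxmem
      refine ⟨x, 1, ⟨hxmem.1, le_refl 1, by simpa using hxmem.2, ?_⟩, ?_⟩
      · calc 1 = 1 * 1 := by ring
          _ ≤ p * x := Nat.mul_le_mul hp hxmem.1
      · rw [hx]; ext y; simp [mem_AP]
    · have hF' : F = AP q a m := hF
      have hm1 : 1 ≤ m := by omega
      have hamem : a ∈ F := by rw [hF']; exact mem_AP.2 ⟨0, hm1, by simp⟩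
      have ha : 1 ≤ a := (Finset.mem_Icc.1 (hsub hamem)).1
      have htop : a + q * (m - 1) ∈ F := by
        rw [hF']; exact mem_AP.2 ⟨m - 1, by omega, rfl⟩
      have htop' := (Finset.mem_Icc.1 (hsub htop)).2
      have hcard : F.card = m := by rw [hF']; exact AP_card hq a m
      have hinf' : sInf (↑F : Set ℕ) = a := by rw [hF']; exact AP_inf q a m hm1
      refine ⟨a, m, ⟨ha, hm1, htop', ?_⟩, hF'⟩
      rw [hcard, hinf'] at hinf
      omega
  · rintro ⟨a, m, ⟨ha, hm, htop, hpa⟩, rfl⟩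
    have hamem : a ∈ AP q a m := mem_AP.2 ⟨0, hm, by simp⟩
    refine ⟨⟨a, hamem⟩, ?_, ?_, ?_⟩
    · intro x hx
      obtain ⟨i, hi, rfl⟩ := mem_AP.1 hx
      rw [Finset.mem_Icc]
      have : q * i ≤ q * (m - 1) := Nat.mul_le_mul_left q (by omega)
      omega
    · rw [AP_card hq, AP_inf q a m hm]; omega
    · rcases eq_or_lt_of_le hm with h | h
      · exact Or.inl (by rw [AP_card hq]; omega)
      · exact Or.inr ⟨a, m, by omega, rfl⟩

def Sfin (p q n : ℕ) : Finset (ℕ × ℕ) :=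
  (Finset.Icc 1 n ×ˢ Finset.Icc 1 (p * n)).filter
    (fun x => x.1 + q * (x.2 - 1) ≤ n ∧ x.2 ≤ p * x.1)

lemma mem_Sfin {p q n : ℕ} {x : ℕ × ℕ} :
    x ∈ Sfin p q n ↔ 1 ≤ x.1 ∧ 1 ≤ x.2 ∧ x.1 + q * (x.2 - 1) ≤ n ∧ x.2 ≤ p * x.1 := by
  simp only [Sfin, Finset.mem_filter, Finset.mem_product, Finset.mem_Icc]
  constructor
  · rintro ⟨⟨⟨h1, h2⟩, h3, h4⟩, h5, h6⟩; exact ⟨h1, h3, h5, h6⟩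
  · rintro ⟨h1, h2, h3, h4⟩
    have hx1 : x.1 ≤ n := by omega
    have : p * x.1 ≤ p * n := Nat.mul_le_mul_left p hx1
    exact ⟨⟨⟨h1, hx1⟩, h2, by omega⟩, h3, h4⟩

lemma mem_Sfin' {p q n a m : ℕ} :
    (a, m) ∈ Sfin p q n ↔ 1 ≤ a ∧ 1 ≤ m ∧ a + q * (m - 1) ≤ n ∧ m ≤ p * a := mem_Sfin

lemma Sr_eq (p q n : ℕ) (hp : 1 ≤ p) (hq : 1 ≤ q) :
    Sr n p q = (Sfin p q n).card := by
  classical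
  set t : Finset (Finset ℕ) := (Sfin p q n).image (fun y => AP q y.1 y.2) with ht
  have hmem : ∀ F : Finset ℕ,
      (F.Nonempty ∧ F ⊆ Finset.Icc 1 n ∧ p * sInf (F : Set ℕ) ≥ F.card ∧ IsAP q F)
      ↔ F ∈ t := by
    intro F
    rw [prop_iff p q n hp hq, ht, Finset.mem_image]
    constructor
    · rintro ⟨a, m, hc, rfl⟩
      exact ⟨(a, m), mem_Sfin.2 hc, rfl⟩
    · rintro ⟨⟨a, m⟩, hmem, rfl⟩
      exact ⟨a, m, mem_Sfin.1 hmem, rfl⟩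
  have : Sr n p q = t.card := by
    rw [Sr, Nat.card_congr (Equiv.subtypeEquivRight hmem), Nat.card_eq_fintype_card,
      Fintype.card_coe]
  rw [this, ht]
  apply Finset.card_image_of_injOn
  intro x hx y hy hxy
  rw [Finset.mem_coe, mem_Sfin] at hx hy
  have hc : x.2 = y.2 := by
    have := congrArg Finset.card hxy
    rwa [AP_card hq, AP_card hq] at this
  have ha : x.1 = y.1 := by
    have := congrArg (fun F : Finset ℕ => sInf (↑F : Set ℕ)) hxy
    simp only at this
    rwa [AP_inf q _ _ hx.2.1, AP_inf q _ _ hy.2.1] at this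
  exact Prod.ext ha hc

lemma Sfin_step (p q n : ℕ) (hp : 1 ≤ p) (hq : 1 ≤ q) (hn : 1 ≤ n) :
    (Sfin p q (n + 1)).card = (Sfin p q n).card + p * (n + q + 1) / (p * q + 1) := by
  classical
  set M := p * (n + q + 1) / (p * q + 1) with hM
  have hMle : ∀ m : ℕ, m ≤ M ↔ m * (p * q + 1) ≤ p * (n + q + 1) := by
    intro m
    rw [hM, Nat.le_div_iff_mul_le (by positivity)]
  set T : Finset (ℕ × ℕ) := (Finset.Icc 1 M).image (fun m => (n + 1 - q * (m - 1), m)) with hT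
  have hTmem : ∀ x : ℕ × ℕ, x ∈ T ↔ ∃ m, (1 ≤ m ∧ m ≤ M) ∧ (n + 1 - q * (m - 1), m) = x := by
    intro x
    simp [hT, Finset.mem_image, Finset.mem_Icc]
  -- key arithmetic facts
  have key1 : ∀ m, 1 ≤ m → m * (p * q + 1) ≤ p * (n + q + 1) → q * (m - 1) ≤ n := by
    intro m hm h
    obtain ⟨m', rfl⟩ : ∃ m', m = m' + 1 := ⟨m - 1, by omega⟩
    simp only [Nat.add_sub_cancel]
    have h1 : (m' + 1) * (p * q + 1) = p * (q * m') + p * q + m' + 1 := by ring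
    have h2 : p * (n + q + 1) = p * n + p * q + p := by ring
    have h3 : p * (q * m') < p * (n + 1) := by
      have h4 : p * (n + 1) = p * n + p := by ring
      omega
    have := Nat.lt_of_mul_lt_mul_left h3
    omega
  have hsplit : Sfin p q (n + 1) = Sfin p q n ∪ T := by
    ext ⟨a, m⟩
    rw [Finset.mem_union, mem_Sfin', mem_Sfin', hTmem]
    constructor
    · rintro ⟨ha, hm, htop, hpa⟩
      rcases Nat.lt_or_ge (a + q * (m - 1)) (n + 1) with h | h
      · exact Or.inl ⟨ha, hm, by omega, hpa⟩
      · have heq : a + q * (m - 1) = n + 1 := by omega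
        refine Or.inr ⟨m, ⟨hm, ?_⟩, by rw [Prod.mk.injEq]; omega⟩
        rw [hMle]
        obtain ⟨m', rfl⟩ : ∃ m', m = m' + 1 := ⟨m - 1, by omega⟩
        simp only [Nat.add_sub_cancel] at heq
        have h1 : (m' + 1) * (p * q + 1) = p * q * m' + p * q + m' + 1 := by ring
        have h2 : p * (n + q + 1) = p * (a + q * m') + p * q := by rw [heq]; ring
        have h3 : p * (a + q * m') = p * a + p * q * m' := by ring
        omega
    · rintro (⟨ha, hm, htop, hpa⟩ | ⟨m', ⟨hm1, hmM⟩, heq⟩)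
      · exact ⟨ha, hm, by omega, hpa⟩
      · rw [hMle] at hmM
        have hqn : q * (m' - 1) ≤ n := key1 m' hm1 hmM
        rw [Prod.mk.injEq] at heq
        obtain ⟨rfl, rfl⟩ := heq
        refine ⟨by omega, hm1, by omega, ?_⟩
        -- m' ≤ p * (n + 1 - q * (m' - 1))
        obtain ⟨k, rfl⟩ : ∃ k, m' = k + 1 := ⟨m' - 1, by omega⟩
        simp only [Nat.add_sub_cancel] at hqn ⊢
        have h1 : (k + 1) * (p * q + 1) = p * q * k + p * q + k + 1 := by ring
        have h2 : p * (n + q + 1) = p * n + p * q + p := by ring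
        have h3 : p * (n + 1 - q * k) + p * (q * k) = p * (n + 1) := by
          rw [← Nat.mul_add]; congr 1; omega
        have h4 : p * (q * k) = p * q * k := by ring
        have h5 : p * (n + 1) = p * n + p := by ring
        omega
  have hdisj : Disjoint (Sfin p q n) T := by
    rw [Finset.disjoint_left]
    rintro ⟨a, m⟩ hx hxT
    rw [mem_Sfin'] at hx
    rw [hTmem] at hxT
    obtain ⟨m', ⟨hm1, hmM⟩, heq⟩ := hxT
    rw [hMle] at hmM
    have hqn : q * (m' - 1) ≤ n := key1 m' hm1 hmM
    rw [Prod.mk.injEq] at heq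
    obtain ⟨h1, rfl⟩ := heq
    omega
  have hTcard : T.card = M := by
    rw [hT, Finset.card_image_of_injective _ (fun x y h => congrArg Prod.snd h),
      Nat.card_Icc]
    exact Nat.succ_sub_one M
  rw [hsplit, Finset.card_union_of_disjoint hdisj, hTcard]

theorem stmt_10 (p q : ℕ) (hp : 1 ≤ p) (hq : 1 ≤ q) :
    ∀ n : ℕ, 1 ≤ n →
      Sr (n + 1) p q - Sr n p q = p * (n + q + 1) / (p * q + 1) := by
  intro n hn
  rw [Sr_eq p q (n + 1) hp hq, Sr_eq p q n hp hq, Sfin_step p q n hp hq hn]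
  exact Nat.add_sub_cancel_left _ _
end
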